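/- Let (Z, d_Z) be a metric space, let M ⊆ Z be a subset equipped with a metric d_M such that d_Z(x,y) ≤ d_M(x,y) for all x, y ∈ M, and suppose the d_M-diameter of M is at most d. Let 0 < ε ≤ 1 and t₀ ≥ 0, and let π : Z → M be a map such that π(x) = x for every x ∈ M, d_Z(x, π(x)) ≤ t₀ for every x ∈ Z, and d_M(π(x), π(y)) ≤ (1/ε)·d_Z(x,y) for all x, y ∈ Z. Then π : (Z, d_Z) → (M, d_M) is a max{ 2t₀, (1/ε − 1)(d + 2t₀) }-Hausdorff approximation. -/

import Mathlib

/-- A projection `pr : Z → M` which is the identity on `M`, moves points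
by at most `t₀`, and is `(1/ε)`-Lipschitz into the intrinsic metric `dM` of `M`
(which dominates the ambient metric and has `dM`-diameter at most `d`), is a
`max{2t₀, (1/ε − 1)(d + 2t₀)}`-Hausdorff approximation from `(Z, d_Z)` to `(M, dM)`. -/
theorem stmt_7
    (Z : Type*) [MetricSpace Z]
    (M : Set Z) (dM : Z → Z → ℝ)
    -- dM is a metric on M
    (hdM_nonneg : ∀ x ∈ M, ∀ y ∈ M, 0 ≤ dM x y)
    (hdM_self : ∀ x ∈ M, dM x x = 0)
    (hdM_symm : ∀ x ∈ M, ∀ y ∈ M, dM x y = dM y x)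
    (hdM_tri : ∀ x ∈ M, ∀ y ∈ M, ∀ z ∈ M, dM x z ≤ dM x y + dM y z)
    -- the ambient distance is dominated by dM on M
    (hle : ∀ x ∈ M, ∀ y ∈ M, dist x y ≤ dM x y)
    -- dM-diameter of M is at most d
    (d : ℝ) (hdiam : ∀ x ∈ M, ∀ y ∈ M, dM x y ≤ d)
    (ε t₀ : ℝ) (hε0 : 0 < ε) (hε1 : ε ≤ 1) (ht₀ : 0 ≤ t₀)
    (pr : Z → Z)
    (hmem : ∀ z : Z, pr z ∈ M)
    (hid : ∀ x ∈ M, pr x = x)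
    (hmove : ∀ z : Z, dist z (pr z) ≤ t₀)
    (hlip : ∀ x y : Z, dM (pr x) (pr y) ≤ (1 / ε) * dist x y) :
    (∀ x y : Z, |dM (pr x) (pr y) - dist x y| ≤ max (2 * t₀) ((1 / ε - 1) * (d + 2 * t₀))) ∧
    (∀ m ∈ M, ∃ z : Z, dM m (pr z) ≤ max (2 * t₀) ((1 / ε - 1) * (d + 2 * t₀))) := by
  have hε' : 1 ≤ 1 / ε := (le_div_iff₀ hε0).mpr (by linarith)
  constructor
  · intro x y
    have hbridge : dist x y ≤ dist (pr x) (pr y) + 2 * t₀ := by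
      have := dist_triangle4 x (pr x) (pr y) y
      have h1 := hmove x
      have h2 := hmove y
      rw [dist_comm (pr y) y] at this
      linarith
    have hle' : dist (pr x) (pr y) ≤ dM (pr x) (pr y) := hle _ (hmem x) _ (hmem y)
    have hdxy : dist x y ≤ d + 2 * t₀ := by
      have := hdiam _ (hmem x) _ (hmem y)
      linarith
    rw [abs_le]
    constructor
    · -- lower bound: dist x y - dM (pr x) (pr y) ≤ 2 t₀
      have : dist x y - dM (pr x) (pr y) ≤ 2 * t₀ := by linarith
      have h2 : (2 : ℝ) * t₀ ≤ max (2 * t₀) ((1 / ε - 1) * (d + 2 * t₀)) := le_max_left _ _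
      linarith
    · have h1 : dM (pr x) (pr y) - dist x y ≤ (1 / ε - 1) * dist x y := by
        have := hlip x y
        linarith [sub_mul (1/ε) 1 (dist x y)]
      have h2 : (1 / ε - 1) * dist x y ≤ (1 / ε - 1) * (d + 2 * t₀) :=
        mul_le_mul_of_nonneg_left hdxy (by linarith)
      exact le_trans (by linarith) (le_max_right _ _)
  · intro m hm
    refine ⟨m, ?_⟩
    rw [hid m hm, hdM_self m hm]
    exact le_max_of_le_left (by linarith)
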